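/- Every fusion frame (w_i, W_i)_{i∈I} for H with positive excess admits a fusion-frame refinement (w_i, V_i)_{i∈J} (J ⊆ I, {0} ≠ V_i ⊆ W_i) whose excess over the original sequence, namely Σ_{i∈J} dim(W_i ⊖ V_i) + Σ_{i∉J} dim W_i, equals 1. -/

import Mathlib

noncomputable section

open scoped InnerProductSpace ENNReal

variable {H K : Type*} [NormedAddCommGroup H] [InnerProductSpace ℂ H] [CompleteSpace H]
  [NormedAddCommGroup K] [InnerProductSpace ℂ K] [CompleteSpace K]

/-- Orthogonal projection onto (the closure of) a subspace, as an operator `H →L[ℂ] H`. -/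
def sproj (M : Submodule ℂ H) : H →L[ℂ] H :=
  M.topologicalClosure.subtypeL ∘L M.topologicalClosure.orthogonalProjectionOnto

/-- The reduced minimum modulus of a bounded operator. -/
def gammaRMM (T : H →L[ℂ] K) : ℝ :=
  sInf ((fun x => ‖T x‖) '' {x : H | x ∈ (LinearMap.ker (T : H →ₗ[ℂ] K))ᗮ ∧ ‖x‖ = 1})

/-- `M ⊖ N`. -/
def ominus (M N : Submodule ℂ H) : Submodule ℂ H := M ⊓ (M ⊓ N)ᗮ

open Classical in
/-- The cosine of the Friedrichs angle between two subspaces. -/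
def angleCos (M N : Submodule ℂ H) : ℝ :=
  if M ≤ N ∨ N ≤ M then 0
  else sSup {r : ℝ | ∃ x ∈ ominus M N, ∃ y ∈ ominus N M,
    ‖x‖ = 1 ∧ ‖y‖ = 1 ∧ r = ‖(inner ℂ x y : ℂ)‖}

/-- The sine of the Friedrichs angle. -/
def angleSin (M N : Submodule ℂ H) : ℝ := Real.sqrt (1 - angleCos M N ^ 2)

variable {I : Type*}

/-- `(w i, W i)` is a fusion frame (frame of subspaces) with bounds `A`, `B`. -/
def IsFusionFrameWith (w : I → ℝ) (W : I → Submodule ℂ H) (A B : ℝ) : Prop :=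
  0 < A ∧ 0 < B ∧ (∀ i, IsClosed (W i : Set H)) ∧
    ∀ f : H, A * ‖f‖ ^ 2 ≤ ∑' i, w i ^ 2 * ‖sproj (W i) f‖ ^ 2 ∧
      ∑' i, w i ^ 2 * ‖sproj (W i) f‖ ^ 2 ≤ B * ‖f‖ ^ 2

/-- `(w i, W i)` is a fusion frame for some bounds. -/
def IsFusionFrame (w : I → ℝ) (W : I → Submodule ℂ H) : Prop :=
  ∃ A B : ℝ, IsFusionFrameWith w W A B

/-- a family of mutually orthogonal closed subspaces with dense span. -/
def IsOBS (E : I → Submodule ℂ H) : Prop :=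
  (∀ i, IsClosed (E i : Set H)) ∧
  (∀ i j, i ≠ j → ∀ x ∈ E i, ∀ y ∈ E j, (inner ℂ x y : ℂ) = 0) ∧
  (⨆ i, E i).topologicalClosure = ⊤

/-- A minimal sequence of subspaces. -/
def IsMinimal (W : I → Submodule ℂ H) : Prop :=
  ∀ i, W i ⊓ (⨆ j ∈ {j : I | j ≠ i}, W j).topologicalClosure = ⊥

/-- The kernel of the synthesis operator of `(w i, W i)`, as a subspace of `⊕₂ W i`. -/
def synthesisKernel (w : I → ℝ) (W : I → Submodule ℂ H) :
    Submodule ℂ (lp (fun i => W i) 2) where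
  carrier := {g | ∀ f : H, HasSum (fun i => (w i : ℂ) * (inner ℂ ((g i : H)) f : ℂ)) 0}
  zero_mem' := by
    intro f
    have : (fun i => (w i : ℂ) * (inner ℂ (((0 : lp (fun i => W i) 2) i : H)) f : ℂ)) =
        fun _ => 0 := by
      funext i; simp [lp.coeFn_zero]
    rw [this]; exact hasSum_zero
  add_mem' := by
    intro a b ha hb f
    have h := (ha f).add (hb f)
    rw [add_zero] at h
    have he : (fun i => (w i : ℂ) * (inner ℂ (((a + b) i : H)) f : ℂ)) =
        fun i => (w i : ℂ) * (inner ℂ ((a i : H)) f : ℂ) +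
          (w i : ℂ) * (inner ℂ ((b i : H)) f : ℂ) := by
      funext i
      have h2 : ((a + b) i : ↥(W i)) = a i + b i := by rw [lp.coeFn_add]; rfl
      rw [h2, Submodule.coe_add, inner_add_left]; ring
    rw [he]; exact h
  smul_mem' := by
    intro c a ha f
    have h := (ha f).mul_left (starRingEnd ℂ c)
    rw [mul_zero] at h
    have he : (fun i => (w i : ℂ) * (inner ℂ (((c • a) i : H)) f : ℂ)) =
        fun i => (starRingEnd ℂ c) * ((w i : ℂ) * (inner ℂ ((a i : H)) f : ℂ)) := by
      funext i
      have h2 : ((c • a) i : ↥(W i)) = c • a i := by rw [lp.coeFn_smul]; rfl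
      rw [h2, Submodule.coe_smul, inner_smul_left]; ring
    rw [he]; exact h

/-- The excess of a fusion frame. -/
def fusionExcess (w : I → ℝ) (W : I → Submodule ℂ H) : Cardinal :=
  Module.rank ℂ (synthesisKernel w W)


/-- The excess of a sequence of subspaces `W` over a refinement `(V i)_{i ∈ Js}`. -/
def refExcess {I : Type*} (W : I → Submodule ℂ H) (Js : Set I) (V : I → Submodule ℂ H) :
    Cardinal :=
  (Cardinal.sum fun i : Js => Module.rank ℂ ((W i.1 ⊓ (V i.1)ᗮ : Submodule ℂ H))) +
    Cardinal.sum fun i : {i : I // i ∉ Js} => Module.rank ℂ (W i.1)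

section Helpers

variable {M : Submodule ℂ H}

lemma sproj_eq_of (hM : IsClosed (M : Set H)) {f v : H} (hv : v ∈ M) (ho : f - v ∈ Mᗮ) :
    sproj M f = v := by
  have hc : M.topologicalClosure = M := hM.submodule_topologicalClosure_eq
  show (↑(M.topologicalClosure.orthogonalProjectionOnto f) : H) = v
  exact Submodule.eq_starProjection_of_mem_orthogonal (by rw [hc]; exact hv) (by rw [hc]; exact ho)

lemma sproj_mem (hM : IsClosed (M : Set H)) (f : H) : sproj M f ∈ M := by
  have hc : M.topologicalClosure = M := hM.submodule_topologicalClosure_eq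
  have h2 : M.topologicalClosure ≤ M := hc.le
  exact h2 (M.topologicalClosure.orthogonalProjectionOnto f).2

lemma sub_sproj_mem (hM : IsClosed (M : Set H)) (f : H) : f - sproj M f ∈ Mᗮ := by
  have hc : M.topologicalClosure = M := hM.submodule_topologicalClosure_eq
  have h2 : M.topologicalClosureᗮ ≤ Mᗮ := by rw [hc]
  exact h2 (Submodule.sub_starProjection_mem_orthogonal (K := M.topologicalClosure) f)

lemma sproj_bot (f : H) : sproj (⊥ : Submodule ℂ H) f = 0 := by
  refine sproj_eq_of ?_ (Submodule.zero_mem _) ?_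
  · simpa [Submodule.bot_coe] using (isClosed_singleton : IsClosed ({0} : Set H))
  · intro x hx
    rcases Submodule.mem_bot ℂ |>.mp hx with rfl
    simp

end Helpers

lemma span_singleton_isClosed (u : H) : IsClosed ((ℂ ∙ u : Submodule ℂ H) : Set H) :=
  (ℂ ∙ u).closed_of_finiteDimensional

lemma sproj_eq_orthProj {M : Submodule ℂ H} [M.HasOrthogonalProjection]
    (hM : IsClosed (M : Set H)) (f : H) :
    sproj M f = (↑(M.orthogonalProjectionOnto f) : H) :=
  (Submodule.eq_starProjection_of_mem_orthogonal (sproj_mem hM f) (sub_sproj_mem hM f)).symm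

lemma sproj_span_norm {u : H} (f : H) :
    ‖sproj (ℂ ∙ u) f‖ * ‖u‖ = ‖(inner ℂ u f : ℂ)‖ := by
  rw [sproj_eq_orthProj (span_singleton_isClosed u), Submodule.coe_orthogonalProjectionOnto_apply, Submodule.starProjection_singleton]
  rcases eq_or_ne u 0 with rfl | hu
  · simp
  have hun : ‖u‖ ≠ 0 := norm_ne_zero_iff.mpr hu
  rw [norm_smul, norm_div, RCLike.norm_ofReal, abs_of_nonneg (by positivity : (0:ℝ) ≤ ‖u‖ ^ 2)]
  field_simp

/-- decomposition inside `W`: the projection onto `W ⊓ (ℂ ∙ u)ᗮ` of an element of `W`. -/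
lemma sproj_inf_eq {Wm : Submodule ℂ H} (hW : IsClosed (Wm : Set H)) {u : H} (hu : u ∈ Wm)
    {x : H} (hx : x ∈ Wm) :
    sproj (Wm ⊓ (ℂ ∙ u)ᗮ) x = x - sproj (ℂ ∙ u) x := by
  have hUc := span_singleton_isClosed u
  have hUW : (ℂ ∙ u) ≤ Wm := (Submodule.span_singleton_le_iff_mem u Wm).mpr hu
  have hVc : IsClosed ((Wm ⊓ (ℂ ∙ u)ᗮ : Submodule ℂ H) : Set H) := by
    rw [Submodule.coe_inf]
    exact hW.inter (Submodule.isClosed_orthogonal _)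
  refine sproj_eq_of hVc ?_ ?_
  · refine Submodule.mem_inf.mpr ⟨Submodule.sub_mem _ hx (hUW (sproj_mem hUc x)), ?_⟩
    exact sub_sproj_mem hUc x
  · have hsub : x - (x - sproj (ℂ ∙ u) x) = sproj (ℂ ∙ u) x := by abel
    rw [hsub]
    have hle : (ℂ ∙ u) ≤ (Wm ⊓ (ℂ ∙ u)ᗮ)ᗮ := by
      refine le_trans (Submodule.le_orthogonal_orthogonal _) (Submodule.orthogonal_le ?_)
      exact inf_le_right
    exact hle (sproj_mem hUc x)

lemma sproj_decomp {Wm : Submodule ℂ H} (hW : IsClosed (Wm : Set H)) {u : H} (hu : u ∈ Wm)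
    (f : H) :
    sproj Wm f = sproj (ℂ ∙ u) f + sproj (Wm ⊓ (ℂ ∙ u)ᗮ) f := by
  have hUc := span_singleton_isClosed u
  have hUW : (ℂ ∙ u) ≤ Wm := (Submodule.span_singleton_le_iff_mem u Wm).mpr hu
  set U : Submodule ℂ H := ℂ ∙ u with hU
  set V : Submodule ℂ H := Wm ⊓ Uᗮ with hV
  have hVc : IsClosed ((V : Submodule ℂ H) : Set H) := by
    rw [hV, Submodule.coe_inf]
    exact hW.inter (Submodule.isClosed_orthogonal _)
  have hVU : V ≤ Uᗮ := inf_le_right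
  have hUVo : U ≤ Vᗮ :=
    le_trans (Submodule.le_orthogonal_orthogonal _) (Submodule.orthogonal_le inf_le_right)
  set a := sproj U f with ha
  set b := sproj V f with hb
  refine sproj_eq_of hW ?_ ?_
  · exact Submodule.add_mem _ (hUW (sproj_mem hUc f)) ((inf_le_left : V ≤ Wm) (sproj_mem hVc f))
  · rw [Submodule.mem_orthogonal]
    intro x hx
    have hdec : x = sproj U x + sproj V x := by
      rw [sproj_inf_eq hW hu hx]; abel
    have hfa : f - a ∈ Uᗮ := sub_sproj_mem hUc f
    have hfb : f - b ∈ Vᗮ := sub_sproj_mem hVc f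
    have h1 : (inner ℂ (sproj U x) (f - (a + b)) : ℂ) = 0 := by
      have e1 : f - (a + b) = (f - a) - b := by abel
      rw [e1, inner_sub_right]
      have t1 : (inner ℂ (sproj U x) (f - a) : ℂ) = 0 := hfa _ (sproj_mem hUc x)
      have t2 : (inner ℂ (sproj U x) b : ℂ) = 0 := (hVU (sproj_mem hVc f)) _ (sproj_mem hUc x)
      rw [t1, t2, sub_zero]
    have h2 : (inner ℂ (sproj V x) (f - (a + b)) : ℂ) = 0 := by
      have e2 : f - (a + b) = (f - b) - a := by abel
      rw [e2, inner_sub_right]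
      have t1 : (inner ℂ (sproj V x) (f - b) : ℂ) = 0 := hfb _ (sproj_mem hVc x)
      have t2 : (inner ℂ (sproj V x) a : ℂ) = 0 := (hUVo (sproj_mem hUc f)) _ (sproj_mem hVc x)
      rw [t1, t2, sub_zero]
    calc (inner ℂ x (f - (a + b)) : ℂ)
        = inner ℂ (sproj U x + sproj V x) (f - (a + b)) := by rw [← hdec]
      _ = inner ℂ (sproj U x) (f - (a + b)) + (inner ℂ (sproj V x) (f - (a + b)) : ℂ) :=
          inner_add_left _ _ _
      _ = 0 := by rw [h1, h2, add_zero]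

lemma sproj_pythagoras {Wm : Submodule ℂ H} (hW : IsClosed (Wm : Set H)) {u : H} (hu : u ∈ Wm)
    (f : H) :
    ‖sproj Wm f‖ ^ 2 = ‖sproj (Wm ⊓ (ℂ ∙ u)ᗮ) f‖ ^ 2 + ‖sproj (ℂ ∙ u) f‖ ^ 2 := by
  have hUc := span_singleton_isClosed u
  have hVc : IsClosed ((Wm ⊓ (ℂ ∙ u)ᗮ : Submodule ℂ H) : Set H) := by
    rw [Submodule.coe_inf]; exact hW.inter (Submodule.isClosed_orthogonal _)
  rw [sproj_decomp hW hu f]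
  have horth : (inner ℂ (sproj (ℂ ∙ u) f) (sproj (Wm ⊓ (ℂ ∙ u)ᗮ) f) : ℂ) = 0 :=
    ((inf_le_right : Wm ⊓ (ℂ ∙ u)ᗮ ≤ (ℂ ∙ u)ᗮ) (sproj_mem hVc f)) _ (sproj_mem hUc f)
  have := @norm_add_sq ℂ _ _ _ _ (sproj (ℂ ∙ u) f) (sproj (Wm ⊓ (ℂ ∙ u)ᗮ) f)
  rw [horth] at this
  simpa [add_comm] using this

lemma inner_sproj {Wm : Submodule ℂ H} (hW : IsClosed (Wm : Set H)) {x : H} (hx : x ∈ Wm)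
    (f : H) : (inner ℂ x f : ℂ) = inner ℂ x (sproj Wm f) := by
  have h0 : (inner ℂ x (f - sproj Wm f) : ℂ) = 0 := (sub_sproj_mem hW f) x hx
  rw [inner_sub_right, sub_eq_zero] at h0
  exact h0

lemma inf_orth_inf_orth {Wm : Submodule ℂ H} (hW : IsClosed (Wm : Set H)) {u : H}
    (hu : u ∈ Wm) : Wm ⊓ (Wm ⊓ (ℂ ∙ u)ᗮ)ᗮ = ℂ ∙ u := by
  have hUc := span_singleton_isClosed u
  have hVc : IsClosed ((Wm ⊓ (ℂ ∙ u)ᗮ : Submodule ℂ H) : Set H) := by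
    rw [Submodule.coe_inf]; exact hW.inter (Submodule.isClosed_orthogonal _)
  refine le_antisymm ?_ ?_
  · rintro x hx
    rcases Submodule.mem_inf.mp hx with ⟨hxW, hxVo⟩
    have hd := sproj_inf_eq hW hu hxW
    have hz : sproj (Wm ⊓ (ℂ ∙ u)ᗮ) x = 0 := by
      refine sproj_eq_of hVc (Submodule.zero_mem _) ?_
      rw [sub_zero]; exact hxVo
    rw [hz] at hd
    have : x = sproj (ℂ ∙ u) x := by
      have := hd.symm
      rwa [sub_eq_zero] at this
    rw [this]
    exact sproj_mem hUc x
  · rw [Submodule.span_singleton_le_iff_mem]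
    refine Submodule.mem_inf.mpr ⟨hu, ?_⟩
    rw [Submodule.mem_orthogonal]
    intro y hy
    rcases Submodule.mem_inf.mp hy with ⟨-, hyUo⟩
    rw [inner_eq_zero_symm]
    exact hyUo u (Submodule.mem_span_singleton_self u)

lemma summable_mul_of_sq {ι : Type*} {a b : ι → ℝ} (ha0 : ∀ i, 0 ≤ a i) (hb0 : ∀ i, 0 ≤ b i)
    (ha : Summable fun i => a i ^ 2) (hb : Summable fun i => b i ^ 2) :
    Summable fun i => a i * b i := by
  refine Summable.of_nonneg_of_le (fun i => mul_nonneg (ha0 i) (hb0 i))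
    (fun i => ?_) ((ha.add hb).div_const 2)
  nlinarith [sq_nonneg (a i - b i)]

lemma tsum_cauchy_schwarz {ι : Type*} {a b : ι → ℝ} (ha0 : ∀ i, 0 ≤ a i) (hb0 : ∀ i, 0 ≤ b i)
    (ha : Summable fun i => a i ^ 2) (hb : Summable fun i => b i ^ 2) :
    (∑' i, a i * b i) ^ 2 ≤ (∑' i, a i ^ 2) * ∑' i, b i ^ 2 := by
  have hab := summable_mul_of_sq ha0 hb0 ha hb
  have hP0 : 0 ≤ (∑' i, a i ^ 2) * ∑' i, b i ^ 2 :=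
    mul_nonneg (tsum_nonneg fun i => sq_nonneg _) (tsum_nonneg fun i => sq_nonneg _)
  have key : ∀ s : Finset ι, ∑ i ∈ s, a i * b i ≤ Real.sqrt ((∑' i, a i ^ 2) * ∑' i, b i ^ 2) := by
    intro s
    have h1 : (∑ i ∈ s, a i * b i) ^ 2 ≤ (∑ i ∈ s, a i ^ 2) * ∑ i ∈ s, b i ^ 2 :=
      Finset.sum_mul_sq_le_sq_mul_sq s a b
    have h2 : (∑ i ∈ s, a i ^ 2) * ∑ i ∈ s, b i ^ 2 ≤ (∑' i, a i ^ 2) * ∑' i, b i ^ 2 := by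
      refine mul_le_mul (Summable.sum_le_tsum s (fun i _ => sq_nonneg _) ha)
        (Summable.sum_le_tsum s (fun i _ => sq_nonneg _) hb)
        (Finset.sum_nonneg fun i _ => sq_nonneg _)
        (tsum_nonneg fun i => sq_nonneg _)
    have h3 : 0 ≤ ∑ i ∈ s, a i * b i :=
      Finset.sum_nonneg fun i _ => mul_nonneg (ha0 i) (hb0 i)
    exact (Real.le_sqrt h3 hP0).mpr (h1.trans h2)
  have h4 : ∑' i, a i * b i ≤ Real.sqrt ((∑' i, a i ^ 2) * ∑' i, b i ^ 2) :=
    Summable.tsum_le_of_sum_le hab key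
  have h5 : (∑' i, a i * b i) ^ 2 ≤ Real.sqrt ((∑' i, a i ^ 2) * ∑' i, b i ^ 2) ^ 2 :=
    pow_le_pow_left₀ (tsum_nonneg fun i => mul_nonneg (ha0 i) (hb0 i)) h4 2
  rwa [Real.sq_sqrt hP0] at h5

universe uu ww

lemma cardinal_sum_single {ι : Type uu} (f : ι → Cardinal.{ww}) (i₀ : ι)
    (h : ∀ i, i ≠ i₀ → f i = 0) : Cardinal.sum f = Cardinal.lift.{uu} (f i₀) := by
  classical
  have hempty : ∀ i, i ≠ i₀ → IsEmpty ((f i).out) := by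
    intro i hi
    rw [← Cardinal.mk_eq_zero_iff, Cardinal.mk_out]
    exact h i hi
  have h1 : Cardinal.sum f = Cardinal.mk (Σ i, (f i).out) := rfl
  have h2 : Cardinal.lift.{uu} (f i₀) = Cardinal.mk (ULift.{uu} ((f i₀).out)) := by
    rw [Cardinal.mk_uLift, Cardinal.mk_out]
  rw [h1, h2]
  refine le_antisymm ?_ ?_
  · refine Cardinal.mk_le_of_injective (f := fun p : Σ i, (f i).out =>
      if hp : p.1 = i₀ then ULift.up (hp ▸ p.2) else ((hempty p.1 hp).elim p.2)) ?_
    rintro ⟨i, x⟩ ⟨j, y⟩ hxy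
    by_cases hi : i = i₀
    · subst hi
      by_cases hj : j = i
      · subst hj
        simp only [dif_pos] at hxy
        have := congrArg ULift.down hxy
        simp at this
        simp [this]
      · exact ((hempty j hj).elim y)
    · exact ((hempty i hi).elim x)
  · refine Cardinal.mk_le_of_injective (f := fun x : ULift.{uu} ((f i₀).out) =>
      (⟨i₀, x.down⟩ : Σ i, (f i).out)) ?_
    rintro ⟨x⟩ ⟨y⟩ hxy
    simp only [Sigma.mk.inj_iff, heq_eq_eq] at hxy
    simp [hxy.2]

lemma cardinal_sum_zero {ι : Type uu} (f : ι → Cardinal.{ww}) (h : ∀ i, f i = 0) :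
    Cardinal.sum f = 0 := by
  have hempty : ∀ i, IsEmpty ((f i).out) := by
    intro i
    rw [← Cardinal.mk_eq_zero_iff, Cardinal.mk_out]
    exact h i
  exact Cardinal.mk_eq_zero_iff.mpr ⟨fun p => (hempty p.1).false p.2⟩

theorem exists_refinement_excess_one {I : Type*} (w : I → ℝ) (hw : ∀ i, 0 < w i)
    (hwb : BddAbove (Set.range w)) (W : I → Submodule ℂ H)
    (hFS : IsFusionFrame w W) (hex : 0 < fusionExcess w W) :
    ∃ (Js : Set I) (V : I → Submodule ℂ H),
      (∀ i ∈ Js, V i ≤ W i ∧ V i ≠ ⊥ ∧ IsClosed (V i : Set H)) ∧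
      IsFusionFrame (fun i : Js => w i.1) (fun i : Js => V i.1) ∧
      refExcess W Js V = 1 := by
  classical
  obtain ⟨A, B, hA, hB, hWc, hbounds⟩ := hFS
  -- pick a nonzero element of the synthesis kernel
  obtain ⟨gS, hgS⟩ := rank_pos_iff_exists_ne_zero.mp hex
  set g : lp (fun i => W i) 2 := (gS : lp (fun i => W i) 2) with hgdef
  have hker : ∀ f : H, HasSum (fun i => (w i : ℂ) * (inner ℂ ((g i : H)) f : ℂ)) 0 := gS.2
  have hgne : g ≠ 0 := fun h => hgS (by rwa [← Submodule.coe_eq_zero])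
  have hex_i : ∃ i, g i ≠ 0 := by
    by_contra hcon
    push_neg at hcon
    exact hgne (lp.ext (funext fun i => by rw [hcon i, lp.coeFn_zero, Pi.zero_apply]))
  obtain ⟨i₀, hi₀⟩ := hex_i
  set u : H := ((g i₀ : W i₀) : H) with hudef
  have hu0 : u ≠ 0 := fun h => hi₀ (by rwa [← Submodule.coe_eq_zero])
  have huW : u ∈ W i₀ := (g i₀).2
  set U : Submodule ℂ H := ℂ ∙ u with hUdef
  set Vm : I → Submodule ℂ H := fun i => if i = i₀ then W i₀ ⊓ Uᗮ else W i with hVmdef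
  have hVle : ∀ i, Vm i ≤ W i := by
    intro i
    by_cases hi : i = i₀
    · simp only [hVmdef, if_pos hi]
      rw [hi]; exact inf_le_left
    · simp only [hVmdef, if_neg hi]; exact le_rfl
  have hVc : ∀ i, IsClosed ((Vm i : Submodule ℂ H) : Set H) := by
    intro i
    by_cases hi : i = i₀
    · simp only [hVmdef, if_pos hi]
      rw [Submodule.coe_inf]
      exact (hWc i₀).inter (Submodule.isClosed_orthogonal _)
    · simp only [hVmdef, if_neg hi]; exact hWc i
  set Js : Set I := {i | Vm i ≠ ⊥} with hJsdef
  -- constants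
  set C : ℝ := ∑' i, ‖(g i : H)‖ ^ 2 with hCdef
  have hCsum : Summable fun i => ‖(g i : H)‖ ^ 2 := by
    have hmem := lp.memℓp g
    rw [memℓp_gen_iff (by norm_num : (0:ℝ) < (2 : ℝ≥0∞).toReal)] at hmem
    refine hmem.congr fun i => ?_
    have h2 : ((2 : ℝ≥0∞)).toReal = ((2 : ℕ) : ℝ) := by norm_num
    rw [h2, Real.rpow_natCast]
    norm_num
  have hC0 : 0 ≤ C := tsum_nonneg fun i => sq_nonneg _
  have hnu : 0 < ‖u‖ := norm_pos_iff.mpr hu0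
  set Kc : ℝ := 1 + C / ‖u‖ ^ 2 with hKcdef
  have hKc : 0 < Kc := by positivity
  -- the analytic core
  have core : ∀ f : H,
      Summable (fun i => w i ^ 2 * ‖sproj (Vm i) f‖ ^ 2) ∧
      A * ‖f‖ ^ 2 ≤ Kc * ∑' i, w i ^ 2 * ‖sproj (Vm i) f‖ ^ 2 ∧
      (∑' i, w i ^ 2 * ‖sproj (Vm i) f‖ ^ 2) ≤ B * ‖f‖ ^ 2 := by
    intro f
    set φ : I → ℝ := fun i => w i ^ 2 * ‖sproj (W i) f‖ ^ 2 with hφdef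
    set ψ : I → ℝ := fun i => w i ^ 2 * ‖sproj (Vm i) f‖ ^ 2 with hψdef
    have hφ0 : ∀ i, 0 ≤ φ i := fun i => by positivity
    have hψ0 : ∀ i, 0 ≤ ψ i := fun i => by positivity
    obtain ⟨hlow, hupp⟩ := hbounds f
    have hφsum : Summable φ := by
      by_cases hf : f = 0
      · have : φ = fun _ => 0 := funext fun i => by simp [hφdef, hf]
        rw [this]; exact summable_zero
      · by_contra hns
        rw [tsum_eq_zero_of_not_summable hns] at hlow
        have h0f : 0 < ‖f‖ := norm_pos_iff.mpr hf
        have hpos : 0 < A * ‖f‖ ^ 2 := by positivity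
        linarith
    have hVi₀ : Vm i₀ = W i₀ ⊓ Uᗮ := if_pos rfl
    have hpyth : φ i₀ = ψ i₀ + w i₀ ^ 2 * ‖sproj U f‖ ^ 2 := by
      have hp := sproj_pythagoras (hWc i₀) huW f
      simp only [hφdef, hψdef, hVi₀, ← hUdef] at hp ⊢
      rw [hp]; ring
    have hψφeq : ∀ i, i ≠ i₀ → ψ i = φ i := fun i hi => by
      simp only [hψdef, hφdef, hVmdef, if_neg hi]
    have hψle : ∀ i, ψ i ≤ φ i := by
      intro i
      by_cases hi : i = i₀
      · rw [hi, hpyth]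
        have h1 : 0 ≤ w i₀ ^ 2 * ‖sproj U f‖ ^ 2 :=
          mul_nonneg (sq_nonneg _) (sq_nonneg _)
        linarith
      · exact (hψφeq i hi).le
    have hψsum : Summable ψ := Summable.of_nonneg_of_le hψ0 hψle hφsum
    have hsplit : ∑' i, φ i = (∑' i, ψ i) + w i₀ ^ 2 * ‖sproj U f‖ ^ 2 := by
      have hfun : φ = fun i => ψ i + (if i = i₀ then w i₀ ^ 2 * ‖sproj U f‖ ^ 2 else 0) := by
        funext i
        by_cases hi : i = i₀
        · subst hi; rw [if_pos rfl, ← hpyth]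
        · rw [if_neg hi, add_zero, hψφeq i hi]
      rw [hfun, Summable.tsum_add hψsum ⟨_, hasSum_ite_eq i₀ _⟩, tsum_ite_eq]
    -- kernel estimate
    set χ : I → ℂ := fun i => (w i : ℂ) * (inner ℂ ((g i : H)) f : ℂ) with hχdef
    have hχ : HasSum χ 0 := hker f
    have hsingle : HasSum (fun i => if i = i₀ then χ i₀ else 0) (χ i₀) := hasSum_ite_eq i₀ _
    have hrest : HasSum (fun i => if i = i₀ then 0 else χ i) (-χ i₀) := by
      have hs := hχ.sub hsingle
      rw [zero_sub] at hs
      have hfe : (fun i => χ i - (if i = i₀ then χ i₀ else 0)) =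
          fun i => if i = i₀ then 0 else χ i := by
        funext i; by_cases hi : i = i₀ <;> simp [hi]
      rwa [hfe] at hs
    set a' : I → ℝ := fun i => if i = i₀ then 0 else ‖(g i : H)‖ with ha'def
    set b' : I → ℝ := fun i => if i = i₀ then 0 else w i * ‖sproj (W i) f‖ with hb'def
    have ha'0 : ∀ i, 0 ≤ a' i := by
      intro i
      simp only [ha'def]
      by_cases hi : i = i₀
      · rw [if_pos hi]
      · rw [if_neg hi]; exact norm_nonneg _
    have hb'0 : ∀ i, 0 ≤ b' i := by
      intro i
      simp only [hb'def]
      by_cases hi : i = i₀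
      · rw [if_pos hi]
      · rw [if_neg hi]; exact mul_nonneg (hw i).le (norm_nonneg _)
    have ha'le : ∀ i, a' i ^ 2 ≤ ‖(g i : H)‖ ^ 2 := by
      intro i
      simp only [ha'def]
      by_cases hi : i = i₀
      · rw [if_pos hi]; simpa using sq_nonneg ‖(g i : H)‖
      · rw [if_neg hi]
    have ha'sq : Summable fun i => a' i ^ 2 :=
      Summable.of_nonneg_of_le (fun i => sq_nonneg _) ha'le hCsum
    have hb'le : ∀ i, b' i ^ 2 ≤ φ i := by
      intro i
      simp only [hb'def, hφdef]
      by_cases hi : i = i₀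
      · rw [if_pos hi]
        have := hφ0 i
        simp only [hφdef] at this
        simpa using this
      · rw [if_neg hi, mul_pow]
    have hb'sq : Summable fun i => b' i ^ 2 :=
      Summable.of_nonneg_of_le (fun i => sq_nonneg _) hb'le hφsum
    have hnormle : ∀ i, ‖(if i = i₀ then 0 else χ i)‖ ≤ a' i * b' i := by
      intro i
      by_cases hi : i = i₀
      · simp only [if_pos hi, norm_zero]
        exact mul_nonneg (ha'0 i) (hb'0 i)
      · simp only [if_neg hi, ha'def, hb'def, hχdef]
        rw [norm_mul, Complex.norm_real, Real.norm_of_nonneg (hw i).le,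
          inner_sproj (hWc i) (g i).2 f]
        calc w i * ‖(inner ℂ ((g i : H)) (sproj (W i) f) : ℂ)‖
            ≤ w i * (‖(g i : H)‖ * ‖sproj (W i) f‖) := by
              exact mul_le_mul_of_nonneg_left (norm_inner_le_norm _ _) (hw i).le
          _ = ‖(g i : H)‖ * (w i * ‖sproj (W i) f‖) := by ring
    have habsum : Summable fun i => a' i * b' i :=
      summable_mul_of_sq ha'0 hb'0 ha'sq hb'sq
    have hχbound : ‖χ i₀‖ ≤ ∑' i, a' i * b' i := by
      have h1 : ‖χ i₀‖ = ‖∑' i, (if i = i₀ then 0 else χ i)‖ := by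
        rw [hrest.tsum_eq, norm_neg]
      rw [h1]
      refine (norm_tsum_le_tsum_norm ?_).trans (Summable.tsum_le_tsum hnormle ?_ habsum)
      · exact Summable.of_nonneg_of_le (fun i => norm_nonneg _) hnormle habsum
      · exact Summable.of_nonneg_of_le (fun i => norm_nonneg _) hnormle habsum
    have hCS : (∑' i, a' i * b' i) ^ 2 ≤ (∑' i, a' i ^ 2) * ∑' i, b' i ^ 2 :=
      tsum_cauchy_schwarz ha'0 hb'0 ha'sq hb'sq
    have hC' : (∑' i, a' i ^ 2) ≤ C := Summable.tsum_le_tsum ha'le ha'sq hCsum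
    have hT' : (∑' i, b' i ^ 2) ≤ ∑' i, ψ i := by
      refine Summable.tsum_le_tsum (fun i => ?_) hb'sq hψsum
      by_cases hi : i = i₀
      · simp only [hb'def, if_pos hi]
        simpa using hψ0 i
      · rw [hψφeq i hi]
        exact hb'le i
    have hψtsum0 : 0 ≤ ∑' i, ψ i := tsum_nonneg hψ0
    have hPU : ‖sproj U f‖ * ‖u‖ = ‖(inner ℂ u f : ℂ)‖ := sproj_span_norm f
    have hχi₀ : ‖χ i₀‖ = w i₀ * ‖(inner ℂ u f : ℂ)‖ := by
      simp only [hχdef, ← hudef]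
      rw [norm_mul, Complex.norm_real, Real.norm_of_nonneg (hw i₀).le]
    have hchain : w i₀ ^ 2 * ‖sproj U f‖ ^ 2 * ‖u‖ ^ 2 ≤ C * ∑' i, ψ i := by
      have e1 : w i₀ ^ 2 * ‖sproj U f‖ ^ 2 * ‖u‖ ^ 2 = ‖χ i₀‖ ^ 2 := by
        rw [hχi₀, ← hPU]; ring
      rw [e1]
      calc ‖χ i₀‖ ^ 2 ≤ (∑' i, a' i * b' i) ^ 2 :=
            pow_le_pow_left₀ (norm_nonneg _) hχbound 2
        _ ≤ (∑' i, a' i ^ 2) * ∑' i, b' i ^ 2 := hCS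
        _ ≤ C * ∑' i, ψ i := by
            refine mul_le_mul hC' hT' (tsum_nonneg fun i => sq_nonneg _) hC0
    have hPUle : w i₀ ^ 2 * ‖sproj U f‖ ^ 2 ≤ C / ‖u‖ ^ 2 * ∑' i, ψ i := by
      rw [div_mul_eq_mul_div, le_div_iff₀ (by positivity : (0:ℝ) < ‖u‖ ^ 2)]
      linarith [hchain]
    refine ⟨hψsum, ?_, ?_⟩
    · have h1 : A * ‖f‖ ^ 2 ≤ ∑' i, φ i := hlow
      rw [hsplit] at h1
      have : A * ‖f‖ ^ 2 ≤ (∑' i, ψ i) + C / ‖u‖ ^ 2 * ∑' i, ψ i := by linarith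
      calc A * ‖f‖ ^ 2 ≤ (1 + C / ‖u‖ ^ 2) * ∑' i, ψ i := by linarith
        _ = Kc * ∑' i, ψ i := by rw [hKcdef]
    · exact (Summable.tsum_le_tsum hψle hψsum hφsum).trans hupp
    -- assemble the answer
  refine ⟨Js, Vm, ?_, ?_, ?_⟩
  · intro i hi
    exact ⟨hVle i, hi, hVc i⟩
  · -- the refined family is a fusion frame
    refine ⟨A / Kc, B, div_pos hA hKc, hB, fun i => hVc i.1, fun f => ?_⟩
    obtain ⟨hψsum, hlowK, huppK⟩ := core f
    have hsub : (∑' (i : ↥Js), w (i : I) ^ 2 * ‖sproj (Vm (i : I)) f‖ ^ 2) =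
        ∑' i, w i ^ 2 * ‖sproj (Vm i) f‖ ^ 2 := by
      rw [tsum_subtype Js (fun i => w i ^ 2 * ‖sproj (Vm i) f‖ ^ 2)]
      refine tsum_congr fun i => ?_
      by_cases hi : i ∈ Js
      · rw [Set.indicator_of_mem hi]
      · rw [Set.indicator_of_notMem hi]
        have hbot : Vm i = ⊥ := not_not.mp hi
        rw [hbot, sproj_bot, norm_zero]
        ring
    constructor
    · rw [hsub, div_mul_eq_mul_div, div_le_iff₀ hKc]
      calc A * ‖f‖ ^ 2 ≤ Kc * ∑' i, w i ^ 2 * ‖sproj (Vm i) f‖ ^ 2 := hlowK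
        _ = (∑' i, w i ^ 2 * ‖sproj (Vm i) f‖ ^ 2) * Kc := by ring
    · rw [hsub]; exact huppK
  · -- the excess over the original sequence is 1
    have hIO : W i₀ ⊓ (Vm i₀)ᗮ = U := by
      have : Vm i₀ = W i₀ ⊓ Uᗮ := if_pos rfl
      rw [this]
      exact inf_orth_inf_orth (hWc i₀) huW
    have hWVo : ∀ i, i ≠ i₀ → W i ⊓ (Vm i)ᗮ = ⊥ := by
      intro i hi
      have : Vm i = W i := if_neg hi
      rw [this]
      exact Submodule.inf_orthogonal_eq_bot (W i)
    haveI : FiniteDimensional ℂ U := by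
      rw [hUdef]
      infer_instance
    have hrankU : Module.rank ℂ U = 1 := by
      rw [← Module.finrank_eq_rank, hUdef, finrank_span_singleton hu0, Nat.cast_one]
    rw [refExcess]
    by_cases hJ : Vm i₀ = ⊥
    · -- i₀ is dropped from the index set
      have hnotJs : i₀ ∉ Js := fun h => h hJ
      have hfirst : (Cardinal.sum fun i : ↥Js =>
          Module.rank ℂ ((W i.1 ⊓ (Vm i.1)ᗮ : Submodule ℂ H))) = 0 := by
        refine cardinal_sum_zero _ fun i => ?_
        have hne : (i : I) ≠ i₀ := fun h => i.2 (by rw [h]; exact hJ)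
        rw [hWVo i.1 hne, rank_bot]
      have hW0 : W i₀ = U := by
        rw [hJ, Submodule.bot_orthogonal_eq_top, inf_top_eq] at hIO
        exact hIO
      have hsecond : (Cardinal.sum fun i : {i : I // i ∉ Js} =>
          Module.rank ℂ (W i.1)) = 1 := by
        rw [cardinal_sum_single _ (⟨i₀, hnotJs⟩ : {i : I // i ∉ Js}) ?_]
        · show Cardinal.lift (Module.rank ℂ (W i₀)) = 1
          rw [hW0, hrankU, Cardinal.lift_one]
        · rintro ⟨i, hi⟩ hne
          have hii : i ≠ i₀ := by
            intro h
            exact hne (Subtype.ext h)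
          have hbot : Vm i = ⊥ := not_not.mp hi
          have hVW : Vm i = W i := if_neg hii
          show Module.rank ℂ (W i) = 0
          rw [← hVW, hbot, rank_bot]
      rw [hfirst, hsecond, zero_add]
    · -- i₀ stays in the index set
      have hJs : i₀ ∈ Js := hJ
      have hfirst : (Cardinal.sum fun i : ↥Js =>
          Module.rank ℂ ((W i.1 ⊓ (Vm i.1)ᗮ : Submodule ℂ H))) = 1 := by
        rw [cardinal_sum_single _ (⟨i₀, hJs⟩ : ↥Js) ?_]
        · show Cardinal.lift (Module.rank ℂ (W i₀ ⊓ (Vm i₀)ᗮ : Submodule ℂ H)) = 1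
          rw [hIO, hrankU, Cardinal.lift_one]
        · rintro ⟨i, hi⟩ hne
          have hii : i ≠ i₀ := by
            intro h
            exact hne (Subtype.ext h)
          show Module.rank ℂ (W i ⊓ (Vm i)ᗮ : Submodule ℂ H) = 0
          rw [hWVo i hii, rank_bot]
      have hsecond : (Cardinal.sum fun i : {i : I // i ∉ Js} =>
          Module.rank ℂ (W i.1)) = 0 := by
        refine cardinal_sum_zero _ fun i => ?_
        have hii : (i : I) ≠ i₀ := by
          intro h
          exact i.2 (by rw [h]; exact hJs)
        have hbot : Vm i.1 = ⊥ := not_not.mp i.2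
        have hVW : Vm i.1 = W i.1 := if_neg hii
        rw [← hVW, hbot, rank_bot]
      rw [hfirst, hsecond, add_zero]


end
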